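/- Let V be a nonnegative adapted process satisfying E[V(k+1) | F_k] ≤ (1 - κ̂)V(k) + ψ̂ for constants 0 < κ̂ < 1 and ψ̂ ≥ 0. If α < ψ̂/κ̂, then P(sup_{0 ≤ k ≤ T} V(k) ≥ α | V(0) = v) ≤ (v/α)(1 - κ̂)^T + (ψ̂/(κ̂ α))(1 - (1 - κ̂)^T). -/

import Mathlib

open MeasureTheory

/-- Finite-horizon probability bound for a nonnegative process with drift
`E[V(k+1) | F_k] ≤ (1 - κ̂) V(k) + ψ̂`, in the case `α < ψ̂/κ̂`:
`P(sup_{0 ≤ k ≤ T} V(k) ≥ α | V 0 = v) ≤ (v/α)(1-κ̂)^T + (ψ̂/(κ̂ α))(1 - (1-κ̂)^T)`. -/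
theorem stmt_2 {Ω : Type*} {mΩ : MeasurableSpace Ω} {μ : Measure Ω}
    [IsProbabilityMeasure μ] (ℱ : Filtration ℕ mΩ) (V : ℕ → Ω → ℝ)
    (hadp : Adapted ℱ V) (hint : ∀ k, Integrable (V k) μ)
    (hnn : ∀ k ω, 0 ≤ V k ω)
    (κhat ψhat : ℝ) (hκ0 : 0 < κhat) (hκ1 : κhat < 1) (hψ : 0 ≤ ψhat)
    (hdrift : ∀ k, μ[V (k + 1)|ℱ k] ≤ᵐ[μ] fun ω => (1 - κhat) * V k ω + ψhat)
    (T : ℕ) (α v : ℝ) (hα : 0 < α) (hv0 : 0 ≤ v)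
    (hV0 : ∀ ω, V 0 ω = v) (hcase : α < ψhat / κhat) :
    (μ {ω | ∃ k ≤ T, α ≤ V k ω}).toReal
      ≤ (v / α) * (1 - κhat) ^ T + (ψhat / (κhat * α)) * (1 - (1 - κhat) ^ T) := by
  set q : ℝ := 1 - κhat with hq
  have hq0 : 0 < q := by rw [hq]; linarith
  have hq1 : q < 1 := by rw [hq]; linarith
  set S : ℕ → ℝ := fun n => ∑ j ∈ Finset.range n, q ^ j with hS
  have hSnn : ∀ n, 0 ≤ S n := fun n => Finset.sum_nonneg fun j _ => pow_nonneg hq0.le _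
  have hSval : ∀ n, S n = (1 - q ^ n) / κhat := by
    intro n
    have h1 : q - 1 = -κhat := by rw [hq]; ring
    rw [hS]
    simp only
    rw [geom_sum_eq (by linarith : q ≠ 1), h1, div_neg, ← neg_div, neg_sub]
  set M : ℕ → Ω → ℝ := fun k ω => q ^ (T - k) * V (min k T) ω + ψhat * S (T - k) with hM
  have hMnn : ∀ k ω, 0 ≤ M k ω := fun k ω =>
    add_nonneg (mul_nonneg (pow_nonneg hq0.le _) (hnn _ _)) (mul_nonneg hψ (hSnn _))
  have hMadp : Adapted ℱ M := by
    intro k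
    exact (((hadp (min k T)).mono (ℱ.mono (min_le_left k T)) le_rfl).const_mul _).add_const _
  have hMint : ∀ k, Integrable (M k) μ := fun k =>
    ((hint (min k T)).const_mul _).add (integrable_const _)
  have hκα : α * κhat < ψhat := (lt_div_iff₀ hκ0).mp hcase
  have key : ∀ m, α ≤ q ^ m * α + ψhat * S m := by
    intro m
    induction m with
    | zero => simp [hS]
    | succ m ih =>
      have hSucc : S (m + 1) = S m + q ^ m := Finset.sum_range_succ _ _
      have hp : (0 : ℝ) ≤ q ^ m := pow_nonneg hq0.le m
      have hstep : q ^ m * α ≤ q ^ (m + 1) * α + ψhat * q ^ m := by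
        have hdiff : q ^ (m + 1) * α + ψhat * q ^ m - q ^ m * α
            = q ^ m * (ψhat - κhat * α) := by rw [pow_succ, hq]; ring
        nlinarith [mul_nonneg hp (by linarith : (0 : ℝ) ≤ ψhat - κhat * α)]
      rw [hSucc, mul_add]
      linarith
  have hMsuper : Supermartingale M ℱ μ := by
    refine supermartingale_nat hMadp.stronglyAdapted hMint fun i => ?_
    rcases le_or_gt T i with hTi | hiT
    · have hMeq : M (i + 1) = M i := by
        funext ω
        simp only [hM]
        rw [Nat.sub_eq_zero_of_le hTi, Nat.sub_eq_zero_of_le (hTi.trans (Nat.le_succ i)),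
          min_eq_right hTi, min_eq_right (hTi.trans (Nat.le_succ i))]
      rw [hMeq, condExp_of_stronglyMeasurable (ℱ.le i) (hMadp i).stronglyMeasurable (hMint i)]
    · obtain ⟨n, hn⟩ : ∃ n, T - i = n + 1 := ⟨T - (i + 1), by omega⟩
      have hn2 : T - (i + 1) = n := by omega
      have hmin1 : min (i + 1) T = i + 1 := min_eq_left hiT
      have hmini : min i T = i := min_eq_left hiT.le
      have hdecomp : M (i + 1) = q ^ n • V (i + 1) + fun _ => ψhat * S n := by
        funext ω
        simp only [hM, hmin1, hn2, Pi.add_apply, Pi.smul_apply, smul_eq_mul]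
      rw [hdecomp]
      have hadd := condExp_add (μ := μ) (m := ℱ i) ((hint (i + 1)).smul (q ^ n))
        (integrable_const (ψhat * S n))
      have hsmul := condExp_smul (μ := μ) (m := ℱ i) (q ^ n) (V (i + 1))
      have hconst : μ[(fun _ : Ω => ψhat * S n)|ℱ i] = fun _ => ψhat * S n :=
        condExp_const (ℱ.le i) _
      have hSucc : S (n + 1) = S n + q ^ n := Finset.sum_range_succ _ _
      filter_upwards [hadd, hsmul, hdrift i] with ω h1 h2 h3
      have hMi : M i ω = q ^ (n + 1) * V i ω + ψhat * S (n + 1) := by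
        simp only [hM, hmini, hn]
      rw [h1, hMi]
      simp only [Pi.add_apply]
      rw [h2]
      simp only [Pi.smul_apply, smul_eq_mul]
      have hp : (0 : ℝ) ≤ q ^ n := pow_nonneg hq0.le n
      have hmul := mul_le_mul_of_nonneg_left h3 hp
      rw [hSucc, mul_add, pow_succ, hconst]
      rw [mul_add, ← mul_assoc] at hmul
      beta_reduce
      linarith [hmul]
  set A := {ω | ∃ k ≤ T, α ≤ V k ω} with hA
  set τ' := hittingBtwn V {y : ℝ | α ≤ y} 0 T with hτ'def
  set τ : Ω → WithTop ℕ := fun ω => (τ' ω : WithTop ℕ) with hτdef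
  have hτst : IsStoppingTime ℱ τ := hadp.isStoppingTime_hittingBtwn measurableSet_Ici
  have hτ'le : ∀ ω, τ' ω ≤ T := fun ω => hittingBtwn_le ω
  have hτle : ∀ ω, τ ω ≤ T := fun ω => WithTop.coe_le_coe.mpr (hτ'le ω)
  have hAmeas : MeasurableSet A := by
    have : A = ⋃ k ∈ Set.Iic T, {ω | α ≤ V k ω} := by
      ext ω; simp [hA]
    rw [this]
    exact MeasurableSet.biUnion (Set.to_countable _) fun k _ =>
      measurableSet_le measurable_const ((hadp k).mono (ℱ.le k) le_rfl)
  have hneg : ∀ σ : Ω → WithTop ℕ, stoppedValue (-M) σ = -(stoppedValue M σ) := fun σ => rfl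
  have hint_sv : Integrable (stoppedValue M τ) μ := by
    have h := (hMsuper.neg.integrable_stoppedValue hτst hτle).neg
    rw [hneg, neg_neg] at h
    exact h
  have hOS : ∫ ω, stoppedValue M τ ω ∂μ ≤ ∫ ω, M 0 ω ∂μ := by
    have h := hMsuper.neg.expected_stoppedValue_mono (isStoppingTime_const ℱ 0) hτst
      (fun ω => WithTop.coe_le_coe.mpr (Nat.zero_le _)) hτle
    have e0 : stoppedValue M (fun _ => WithTop.some (0 : ℕ)) = M 0 := rfl
    rw [hneg, hneg, e0] at h
    simp only [Pi.neg_apply, integral_neg, neg_le_neg_iff] at h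
    exact h
  have hM0 : M 0 = fun _ => q ^ T * v + ψhat * S T := by
    funext ω
    simp only [hM, Nat.sub_zero, min_eq_left (Nat.zero_le T), hV0 ω]
  have hIM0 : ∫ ω, M 0 ω ∂μ = q ^ T * v + ψhat * S T := by
    simp [hM0]
  have hlow : ∀ ω, Set.indicator A (fun _ => α) ω ≤ stoppedValue M τ ω := by
    intro ω
    by_cases hω : ω ∈ A
    · rw [Set.indicator_of_mem hω]
      obtain ⟨k, hk, hVk⟩ := hω
      have hmem : V (τ' ω) ω ∈ {y : ℝ | α ≤ y} :=
        stoppedValue_hittingBtwn_mem ⟨k, ⟨Nat.zero_le _, hk⟩, hVk⟩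
      have hsv : stoppedValue M τ ω
          = q ^ (T - τ' ω) * V (τ' ω) ω + ψhat * S (T - τ' ω) := by
        show M (τ' ω) ω = _
        simp only [hM, min_eq_left (hτ'le ω)]
      rw [hsv]
      calc α ≤ q ^ (T - τ' ω) * α + ψhat * S (T - τ' ω) := key _
        _ ≤ q ^ (T - τ' ω) * V (τ' ω) ω + ψhat * S (T - τ' ω) := by
            have : α ≤ V (τ' ω) ω := hmem
            have hp : (0 : ℝ) ≤ q ^ (T - τ' ω) := pow_nonneg hq0.le _
            nlinarith
    · rw [Set.indicator_of_notMem hω]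
      exact hMnn _ _
  have hmono : ∫ ω, Set.indicator A (fun _ => α) ω ∂μ ≤ ∫ ω, stoppedValue M τ ω ∂μ :=
    integral_mono ((integrable_const α).indicator hAmeas) hint_sv hlow
  have hind : ∫ ω, Set.indicator A (fun _ => α) ω ∂μ = (μ A).toReal * α := by
    rw [integral_indicator_const _ hAmeas]; simp [smul_eq_mul]; left; rfl
  have hfin : (μ A).toReal * α ≤ q ^ T * v + ψhat * S T := by
    rw [← hind, ← hIM0]
    exact hmono.trans hOS
  have hgoal : (v / α) * q ^ T + (ψhat / (κhat * α)) * (1 - q ^ T)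
      = (q ^ T * v + ψhat * S T) / α := by
    rw [hSval T]
    field_simp
  rw [hgoal, le_div_iff₀ hα]
  linarith
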